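/- On the seven-dimensional Lie algebra 𝔮 with structure equations de¹ = e³⁷, de² = e⁴⁷, de³ = 2e¹⁷, de⁴ = 2e²⁷, de⁵ = e¹⁴ + e²³, de⁶ = e¹³ − e²⁴, de⁷ = 0, the 3-form φ = (e¹² + e³⁴ + e⁵⁶)∧e⁷ + e¹³⁵ − e¹⁴⁶ − e²³⁶ − e²⁴⁵ equals d_θ γ = dγ + θ∧γ for θ = −e⁷ and γ = (5/7)e¹² − (3/7)e¹⁴ + (3/7)e²³ − (1/7)e³⁴ − e⁵⁶; in particular dφ = e⁷∧φ. -/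
import Mathlib


noncomputable section

variable {n : ℕ}

/-- The `i`-th coordinate covector `eᵢ`. -/
def ec (i : Fin n) : (Fin n → ℝ) → ℝ := fun x => x i

/-- A bracket is a Lie bracket if it is bilinear, antisymmetric and satisfies
the Jacobi identity. -/
def IsLieBracket (br : (Fin n → ℝ) → (Fin n → ℝ) → (Fin n → ℝ)) : Prop :=
  (∀ x y z, br (x + y) z = br x z + br y z) ∧
  (∀ (a : ℝ) x y, br (a • x) y = a • br x y) ∧
  (∀ x y, br x y = -br y x) ∧
  (∀ x y z, br x (br y z) + br y (br z x) + br z (br x y) = 0)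

/-- Chevalley–Eilenberg differential of a 1-form: `dα(x,y) = -α([x,y])`. -/
def ced1 (br : (Fin n → ℝ) → (Fin n → ℝ) → (Fin n → ℝ)) (α : (Fin n → ℝ) → ℝ) :
    (Fin n → ℝ) → (Fin n → ℝ) → ℝ :=
  fun x y => -α (br x y)

/-- Chevalley–Eilenberg differential of a 2-form. -/
def ced2 (br : (Fin n → ℝ) → (Fin n → ℝ) → (Fin n → ℝ))
    (α : (Fin n → ℝ) → (Fin n → ℝ) → ℝ) :
    (Fin n → ℝ) → (Fin n → ℝ) → (Fin n → ℝ) → ℝ :=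
  fun x y z => -α (br x y) z + α (br x z) y - α (br y z) x

/-- Chevalley–Eilenberg differential of a 3-form. -/
def ced3 (br : (Fin n → ℝ) → (Fin n → ℝ) → (Fin n → ℝ))
    (α : (Fin n → ℝ) → (Fin n → ℝ) → (Fin n → ℝ) → ℝ) :
    (Fin n → ℝ) → (Fin n → ℝ) → (Fin n → ℝ) → (Fin n → ℝ) → ℝ :=
  fun w x y z =>
    -α (br w x) y z + α (br w y) x z - α (br w z) x y
      - α (br x y) w z + α (br x z) w y - α (br y z) w x

/-- Chevalley–Eilenberg differential of a 4-form. -/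
def ced4 (br : (Fin n → ℝ) → (Fin n → ℝ) → (Fin n → ℝ))
    (β : (Fin n → ℝ) → (Fin n → ℝ) → (Fin n → ℝ) → (Fin n → ℝ) → ℝ) :
    (Fin n → ℝ) → (Fin n → ℝ) → (Fin n → ℝ) → (Fin n → ℝ) → (Fin n → ℝ) → ℝ :=
  fun x0 x1 x2 x3 x4 =>
    -β (br x0 x1) x2 x3 x4 + β (br x0 x2) x1 x3 x4 - β (br x0 x3) x1 x2 x4
      + β (br x0 x4) x1 x2 x3 - β (br x1 x2) x0 x3 x4 + β (br x1 x3) x0 x2 x4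
      - β (br x1 x4) x0 x2 x3 - β (br x2 x3) x0 x1 x4 + β (br x2 x4) x0 x1 x3
      - β (br x3 x4) x0 x1 x2

/-- Wedge of two 1-forms. -/
def w11 (α β : (Fin n → ℝ) → ℝ) : (Fin n → ℝ) → (Fin n → ℝ) → ℝ :=
  fun x y => α x * β y - α y * β x

/-- Wedge of a 1-form and a 2-form. -/
def w12 (θ : (Fin n → ℝ) → ℝ) (α : (Fin n → ℝ) → (Fin n → ℝ) → ℝ) :
    (Fin n → ℝ) → (Fin n → ℝ) → (Fin n → ℝ) → ℝ :=
  fun x y z => θ x * α y z - θ y * α x z + θ z * α x y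

/-- Wedge of a 2-form and a 1-form. -/
def w21 (α : (Fin n → ℝ) → (Fin n → ℝ) → ℝ) (θ : (Fin n → ℝ) → ℝ) :
    (Fin n → ℝ) → (Fin n → ℝ) → (Fin n → ℝ) → ℝ :=
  fun x y z => α x y * θ z - α x z * θ y + α y z * θ x

/-- Wedge of a 1-form and a 3-form. -/
def w13 (θ : (Fin n → ℝ) → ℝ)
    (ψ : (Fin n → ℝ) → (Fin n → ℝ) → (Fin n → ℝ) → ℝ) :
    (Fin n → ℝ) → (Fin n → ℝ) → (Fin n → ℝ) → (Fin n → ℝ) → ℝ :=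
  fun w x y z => θ w * ψ x y z - θ x * ψ w y z + θ y * ψ w x z - θ z * ψ w x y

/-- Wedge of two 2-forms. -/
def w22 (α β : (Fin n → ℝ) → (Fin n → ℝ) → ℝ) :
    (Fin n → ℝ) → (Fin n → ℝ) → (Fin n → ℝ) → (Fin n → ℝ) → ℝ :=
  fun x0 x1 x2 x3 =>
    α x0 x1 * β x2 x3 - α x0 x2 * β x1 x3 + α x0 x3 * β x1 x2
      + α x2 x3 * β x0 x1 - α x1 x3 * β x0 x2 + α x1 x2 * β x0 x3

/-- The basic wedge monomial `eⁱ ∧ eʲ ∧ eᵏ` (0-indexed). -/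
def trip (i j k : Fin n) : (Fin n → ℝ) → (Fin n → ℝ) → (Fin n → ℝ) → ℝ :=
  fun x y z =>
    x i * y j * z k - x i * y k * z j - x j * y i * z k
      + x j * y k * z i + x k * y i * z j - x k * y j * z i

end

noncomputable section

/-- The structure equations of the solvable Lie algebra `𝔮`:
`de¹ = e³⁷, de² = e⁴⁷, de³ = 2e¹⁷, de⁴ = 2e²⁷, de⁵ = e¹⁴ + e²³,
de⁶ = e¹³ - e²⁴, de⁷ = 0` (0-indexed below). -/
def structEqQ (br : (Fin 7 → ℝ) → (Fin 7 → ℝ) → (Fin 7 → ℝ)) : Prop :=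
  ∀ x y : Fin 7 → ℝ,
    ced1 br (ec 0) x y = w11 (ec 2) (ec 6) x y ∧
    ced1 br (ec 1) x y = w11 (ec 3) (ec 6) x y ∧
    ced1 br (ec 2) x y = 2 * w11 (ec 0) (ec 6) x y ∧
    ced1 br (ec 3) x y = 2 * w11 (ec 1) (ec 6) x y ∧
    ced1 br (ec 4) x y = w11 (ec 0) (ec 3) x y + w11 (ec 1) (ec 2) x y ∧
    ced1 br (ec 5) x y = w11 (ec 0) (ec 2) x y - w11 (ec 1) (ec 3) x y ∧
    ced1 br (ec 6) x y = 0

/-- The `G₂`-form `φ = (e¹² + e³⁴ + e⁵⁶) ∧ e⁷ + e¹³⁵ - e¹⁴⁶ - e²³⁶ - e²⁴⁵`. -/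
def phiQ : (Fin 7 → ℝ) → (Fin 7 → ℝ) → (Fin 7 → ℝ) → ℝ :=
  fun x y z =>
    w21 (fun a b => w11 (ec 0) (ec 1) a b + w11 (ec 2) (ec 3) a b +
      w11 (ec 4) (ec 5) a b) (ec 6) x y z +
    (trip 0 2 4 x y z - trip 0 3 5 x y z - trip 1 2 5 x y z - trip 1 3 4 x y z)

/-- The 1-form `θ = -e⁷`. -/
def thetaQ : (Fin 7 → ℝ) → ℝ := fun x => -(ec 6 x)

/-- The 2-form `γ = (5/7)e¹² - (3/7)e¹⁴ + (3/7)e²³ - (1/7)e³⁴ - e⁵⁶`. -/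
def gammaQ : (Fin 7 → ℝ) → (Fin 7 → ℝ) → ℝ :=
  fun x y =>
    (5 / 7) * w11 (ec 0) (ec 1) x y - (3 / 7) * w11 (ec 0) (ec 3) x y
      + (3 / 7) * w11 (ec 1) (ec 2) x y - (1 / 7) * w11 (ec 2) (ec 3) x y
      - w11 (ec 4) (ec 5) x y


/-- Explicit bracket realizing the structure equations. -/
def brQ (x y : Fin 7 → ℝ) : Fin 7 → ℝ :=
  ![-(x 2 * y 6 - x 6 * y 2),
    -(x 3 * y 6 - x 6 * y 3),
    -(2 * (x 0 * y 6 - x 6 * y 0)),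
    -(2 * (x 1 * y 6 - x 6 * y 1)),
    -((x 0 * y 3 - x 3 * y 0) + (x 1 * y 2 - x 2 * y 1)),
    -((x 0 * y 2 - x 2 * y 0) - (x 1 * y 3 - x 3 * y 1)),
    0]

lemma brQ0 (x y : Fin 7 → ℝ) : brQ x y 0 = -(x 2 * y 6 - x 6 * y 2) := rfl
lemma brQ1 (x y : Fin 7 → ℝ) : brQ x y 1 = -(x 3 * y 6 - x 6 * y 3) := rfl
lemma brQ2 (x y : Fin 7 → ℝ) : brQ x y 2 = -(2 * (x 0 * y 6 - x 6 * y 0)) := rfl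
lemma brQ3 (x y : Fin 7 → ℝ) : brQ x y 3 = -(2 * (x 1 * y 6 - x 6 * y 1)) := rfl
lemma brQ4 (x y : Fin 7 → ℝ) :
    brQ x y 4 = -((x 0 * y 3 - x 3 * y 0) + (x 1 * y 2 - x 2 * y 1)) := rfl
lemma brQ5 (x y : Fin 7 → ℝ) :
    brQ x y 5 = -((x 0 * y 2 - x 2 * y 0) - (x 1 * y 3 - x 3 * y 1)) := rfl
lemma brQ6 (x y : Fin 7 → ℝ) : brQ x y 6 = 0 := rfl

lemma structEqQ_brQ : structEqQ brQ := by
  intro x y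
  refine ⟨?_, ?_, ?_, ?_, ?_, ?_, ?_⟩ <;>
    simp only [ced1, ec, w11, brQ0, brQ1, brQ2, brQ3, brQ4, brQ5, brQ6] <;> ring

lemma funext7 {f g : Fin 7 → ℝ} (h0 : f 0 = g 0) (h1 : f 1 = g 1) (h2 : f 2 = g 2)
    (h3 : f 3 = g 3) (h4 : f 4 = g 4) (h5 : f 5 = g 5) (h6 : f 6 = g 6) : f = g := by
  funext i
  fin_cases i
  exacts [h0, h1, h2, h3, h4, h5, h6]

lemma bracket_eq {br : (Fin 7 → ℝ) → (Fin 7 → ℝ) → (Fin 7 → ℝ)}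
    (h : structEqQ br) (x y : Fin 7 → ℝ) : br x y = brQ x y := by
  obtain ⟨h0, h1, h2, h3, h4, h5, h6⟩ := h x y
  simp only [ced1, ec, w11] at h0 h1 h2 h3 h4 h5 h6
  refine funext7 ?_ ?_ ?_ ?_ ?_ ?_ ?_ <;>
    simp only [brQ0, brQ1, brQ2, brQ3, brQ4, brQ5, brQ6] <;> linarith

set_option maxHeartbeats 1000000 in
lemma isLieBracket_brQ : IsLieBracket brQ := by
  refine ⟨?_, ?_, ?_, ?_⟩
  · intro x y z
    refine funext7 ?_ ?_ ?_ ?_ ?_ ?_ ?_ <;>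
      simp only [brQ0, brQ1, brQ2, brQ3, brQ4, brQ5, brQ6, Pi.add_apply] <;> ring
  · intro a x y
    refine funext7 ?_ ?_ ?_ ?_ ?_ ?_ ?_ <;>
      simp only [brQ0, brQ1, brQ2, brQ3, brQ4, brQ5, brQ6, Pi.smul_apply,
        smul_eq_mul] <;> ring
  · intro x y
    refine funext7 ?_ ?_ ?_ ?_ ?_ ?_ ?_ <;>
      simp only [brQ0, brQ1, brQ2, brQ3, brQ4, brQ5, brQ6, Pi.neg_apply] <;> ring
  · intro x y z
    refine funext7 ?_ ?_ ?_ ?_ ?_ ?_ ?_ <;>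
      simp only [Pi.add_apply, Pi.zero_apply, brQ0, brQ1, brQ2, brQ3, brQ4, brQ5,
        brQ6] <;> ring

set_option maxHeartbeats 4000000 in
/-- On `𝔮`, the `G₂`-form `φ` equals `d_θ γ = dγ + θ ∧ γ` with
`θ = -e⁷`; in particular `dφ = e⁷ ∧ φ`. -/
theorem dTheta_exact_on_q :
    (∃ br : (Fin 7 → ℝ) → (Fin 7 → ℝ) → (Fin 7 → ℝ), IsLieBracket br ∧ structEqQ br) ∧
    ∀ br : (Fin 7 → ℝ) → (Fin 7 → ℝ) → (Fin 7 → ℝ), IsLieBracket br → structEqQ br →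
      (∀ x y z : Fin 7 → ℝ,
        phiQ x y z = ced2 br gammaQ x y z + w12 thetaQ gammaQ x y z) ∧
      (∀ w x y z : Fin 7 → ℝ, ced3 br phiQ w x y z = w13 (ec 6) phiQ w x y z) := by
  constructor
  · exact ⟨brQ, isLieBracket_brQ, structEqQ_brQ⟩
  · intro br _ hs
    constructor
    · intro x y z
      rw [ced2, show br x y = brQ x y from bracket_eq hs x y,
        show br x z = brQ x z from bracket_eq hs x z,
        show br y z = brQ y z from bracket_eq hs y z]
      simp only [phiQ, gammaQ, thetaQ, w21, w11, w12, trip, ec,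
        brQ0, brQ1, brQ2, brQ3, brQ4, brQ5, brQ6]
      ring
    · intro w x y z
      rw [ced3, show br w x = brQ w x from bracket_eq hs w x,
        show br w y = brQ w y from bracket_eq hs w y,
        show br w z = brQ w z from bracket_eq hs w z,
        show br x y = brQ x y from bracket_eq hs x y,
        show br x z = brQ x z from bracket_eq hs x z,
        show br y z = brQ y z from bracket_eq hs y z]
      simp only [phiQ, w21, w11, w13, trip, ec,
        brQ0, brQ1, brQ2, brQ3, brQ4, brQ5, brQ6]
      ring

end
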